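/- Let n ≥ 2 and let ∇ = ∇⁰ + Γ be a symplectic connection on (ℝ^{2n},Ω) of Ricci type, and let u be a smooth 1-form with (∇_X r)(x)(Y,Z) = (1/(2n+1))·(Ω(X,Y)u(x)(Z) + Ω(X,Z)u(x)(Y)) for all x,X,Y,Z. Then ∇ is locally symmetric, i.e. (∇_X R)(x)(Y,Z) = 0 for all x,X,Y,Z, if and only if u vanishes identically. -/

import Mathlib

noncomputable section
set_option maxHeartbeats 1000000

/-- The standard symplectic form on `ℝ^{2n}`. -/
def Omega (n : ℕ) (x y : Fin (2*n) → ℝ) : ℝ :=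
  ∑ i : Fin n, (x ⟨i.1, by have := i.isLt; omega⟩ * y ⟨n + i.1, by have := i.isLt; omega⟩
    - x ⟨n + i.1, by have := i.isLt; omega⟩ * y ⟨i.1, by have := i.isLt; omega⟩)

/-- The curvature of `∇ = ∇⁰ + Γ`. -/
def curv (n : ℕ) (Γ : (Fin (2*n) → ℝ) → (Fin (2*n) → ℝ) →L[ℝ] (Fin (2*n) → ℝ) →L[ℝ] (Fin (2*n) → ℝ))
    (x X Y : Fin (2*n) → ℝ) : (Fin (2*n) → ℝ) →L[ℝ] (Fin (2*n) → ℝ) :=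
  fderiv ℝ Γ x X Y - fderiv ℝ Γ x Y X + (Γ x X).comp (Γ x Y) - (Γ x Y).comp (Γ x X)

/-- The Ricci tensor `r(x)(X,Y) = Tr(Z ↦ R(x)(X,Z)Y)`. -/
def ricci (n : ℕ) (Γ : (Fin (2*n) → ℝ) → (Fin (2*n) → ℝ) →L[ℝ] (Fin (2*n) → ℝ) →L[ℝ] (Fin (2*n) → ℝ))
    (x X Y : Fin (2*n) → ℝ) : ℝ :=
  ∑ a : Fin (2*n), curv n Γ x X (Pi.single a 1) Y a

/-- `∇` is of Ricci type. -/
def IsRicciType (n : ℕ)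
    (Γ : (Fin (2*n) → ℝ) → (Fin (2*n) → ℝ) →L[ℝ] (Fin (2*n) → ℝ) →L[ℝ] (Fin (2*n) → ℝ)) : Prop :=
  ∀ x X Y Z T, Omega n (curv n Γ x X Y Z) T =
    -(1/(2*((n:ℝ)+1))) * (2 * Omega n X Y * ricci n Γ x Z T
      + Omega n X Z * ricci n Γ x Y T + Omega n X T * ricci n Γ x Y Z
      - Omega n Y Z * ricci n Γ x X T - Omega n Y T * ricci n Γ x X Z)

/-- The covariant derivative of the Ricci tensor. -/
def nablaRicci (n : ℕ)
    (Γ : (Fin (2*n) → ℝ) → (Fin (2*n) → ℝ) →L[ℝ] (Fin (2*n) → ℝ) →L[ℝ] (Fin (2*n) → ℝ))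
    (x X Y Z : Fin (2*n) → ℝ) : ℝ :=
  fderiv ℝ (fun p => ricci n Γ p Y Z) x X - ricci n Γ x (Γ x X Y) Z - ricci n Γ x Y (Γ x X Z)

/-- The covariant derivative of the curvature, as an `End(V)`-valued expression:
`(∇_X R)(x)(Y,Z) = D_X(R(·)(Y,Z))(x) + Γ(x)(X)∘R(x)(Y,Z) − R(x)(Y,Z)∘Γ(x)(X)
− R(x)(Γ(x)(X)Y,Z) − R(x)(Y,Γ(x)(X)Z)`. -/
def nablaCurv (n : ℕ)
    (Γ : (Fin (2*n) → ℝ) → (Fin (2*n) → ℝ) →L[ℝ] (Fin (2*n) → ℝ) →L[ℝ] (Fin (2*n) → ℝ))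
    (x X Y Z : Fin (2*n) → ℝ) : (Fin (2*n) → ℝ) →L[ℝ] (Fin (2*n) → ℝ) :=
  fderiv ℝ (fun p => curv n Γ p Y Z) x X
    + (Γ x X).comp (curv n Γ x Y Z) - (curv n Γ x Y Z).comp (Γ x X)
    - curv n Γ x (Γ x X Y) Z - curv n Γ x Y (Γ x X Z)

namespace StmtAux

variable {n : ℕ}

/-! ### Linear algebra of `Omega` -/

lemma Omega_add_left (x x' y : Fin (2*n) → ℝ) :
    Omega n (x + x') y = Omega n x y + Omega n x' y := by
  unfold Omega
  rw [← Finset.sum_add_distrib]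
  exact Finset.sum_congr rfl fun i _ => by simp [Pi.add_apply]; ring

lemma Omega_smul_left (c : ℝ) (x y : Fin (2*n) → ℝ) :
    Omega n (c • x) y = c * Omega n x y := by
  unfold Omega
  rw [Finset.mul_sum]
  exact Finset.sum_congr rfl fun i _ => by simp [Pi.smul_apply]; ring

lemma Omega_antisym (x y : Fin (2*n) → ℝ) : Omega n x y = - Omega n y x := by
  unfold Omega
  rw [← Finset.sum_neg_distrib]
  exact Finset.sum_congr rfl fun i _ => by ring

lemma Omega_sub_left (x x' y : Fin (2*n) → ℝ) :
    Omega n (x - x') y = Omega n x y - Omega n x' y := by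
  have h := Omega_add_left (x - x') x' y
  rw [sub_add_cancel] at h
  linarith

/-- `Ω(·,T)` as a continuous linear map. -/
def omegaCLM (n : ℕ) (T : Fin (2*n) → ℝ) : (Fin (2*n) → ℝ) →L[ℝ] ℝ :=
  LinearMap.toContinuousLinearMap
    { toFun := fun v => Omega n v T
      map_add' := fun x y => Omega_add_left x y T
      map_smul' := fun c x => Omega_smul_left c x T }

@[simp] lemma omegaCLM_apply (T v : Fin (2*n) → ℝ) : omegaCLM n T v = Omega n v T := rfl

lemma single_mk {m j k : ℕ} (hj : j < m) (hk : k < m) :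
    (Pi.single (⟨j, hj⟩ : Fin m) 1 : Fin m → ℝ) ⟨k, hk⟩ = if k = j then 1 else 0 := by
  rw [Pi.single_apply]
  simp [Fin.ext_iff]

lemma Omega_single_hi (v : Fin (2*n) → ℝ) (i : Fin n) :
    Omega n v (Pi.single (⟨n + i.1, by have := i.isLt; omega⟩ : Fin (2*n)) 1)
      = v ⟨i.1, by have := i.isLt; omega⟩ := by
  unfold Omega
  rw [Finset.sum_eq_single i]
  · rw [single_mk, single_mk, if_pos rfl, if_neg (by have := i.isLt; omega)]; ring
  · intro b _ hb
    rw [single_mk, single_mk, if_neg (by have := b.isLt; omega),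
      if_neg (fun h => hb (Fin.ext (by omega)))]; ring
  · simp

lemma Omega_single_lo (v : Fin (2*n) → ℝ) (i : Fin n) :
    Omega n v (Pi.single (⟨i.1, by have := i.isLt; omega⟩ : Fin (2*n)) 1)
      = - v ⟨n + i.1, by have := i.isLt; omega⟩ := by
  unfold Omega
  rw [Finset.sum_eq_single i]
  · rw [single_mk, single_mk, if_pos rfl, if_neg (by have := i.isLt; omega)]; ring
  · intro b _ hb
    rw [single_mk, single_mk, if_neg (by have := i.isLt; omega),
      if_neg (fun h => hb (Fin.ext (by omega)))]; ring
  · simp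

lemma Omega_nondeg {v : Fin (2*n) → ℝ} (h : ∀ T, Omega n v T = 0) : v = 0 := by
  funext a
  rcases lt_or_ge a.1 n with ha | ha
  · have h2 := h (Pi.single (⟨n + a.1, by omega⟩ : Fin (2*n)) 1)
    rw [Omega_single_hi v ⟨a.1, ha⟩] at h2
    simpa using h2
  · have hlt : a.1 - n < n := by have := a.isLt; omega
    have h2 := h (Pi.single (⟨a.1 - n, by omega⟩ : Fin (2*n)) 1)
    rw [Omega_single_lo v ⟨a.1 - n, hlt⟩] at h2
    have he : (⟨n + (a.1 - n), by omega⟩ : Fin (2*n)) = a :=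
      Fin.ext (show n + (a.1 - n) = a.1 by omega)
    rw [he] at h2
    have : v a = 0 := by linarith
    simpa using this

lemma vec_decomp (w : Fin (2*n) → ℝ) :
    w = ∑ b : Fin (2*n), w b • (Pi.single b 1 : Fin (2*n) → ℝ) := by
  funext j
  rw [Finset.sum_apply]
  simp [Pi.single_apply]

/-! ### A trace identity -/

lemma trace_comm (f g : (Fin (2*n) → ℝ) →ₗ[ℝ] (Fin (2*n) → ℝ)) :
    ∑ a : Fin (2*n), f (g (Pi.single a 1)) a = ∑ a : Fin (2*n), g (f (Pi.single a 1)) a := by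
  have key : ∀ (f g : (Fin (2*n) → ℝ) →ₗ[ℝ] (Fin (2*n) → ℝ)) (a : Fin (2*n)),
      f (g (Pi.single a 1)) a
        = ∑ b : Fin (2*n), g (Pi.single a 1) b * f (Pi.single b 1) a := by
    intro f g a
    conv_lhs => rw [vec_decomp (g (Pi.single a 1))]
    rw [map_sum, Finset.sum_apply]
    exact Finset.sum_congr rfl fun b _ => by rw [map_smul]; simp
  rw [Finset.sum_congr rfl fun a _ => key f g a,
    Finset.sum_congr rfl fun a _ => key g f a, Finset.sum_comm]
  exact Finset.sum_congr rfl fun a _ => Finset.sum_congr rfl fun b _ => by ring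

variable {Γ : (Fin (2*n) → ℝ) → (Fin (2*n) → ℝ) →L[ℝ] (Fin (2*n) → ℝ) →L[ℝ] (Fin (2*n) → ℝ)}

/-! ### The curvature as a (continuous) linear map in its middle argument -/

/-- `W ↦ R(x)(Y,W)Z` as a continuous linear map. -/
def curvMid (Γ : (Fin (2*n) → ℝ) → (Fin (2*n) → ℝ) →L[ℝ] (Fin (2*n) → ℝ) →L[ℝ] (Fin (2*n) → ℝ))
    (x Y Z : Fin (2*n) → ℝ) : (Fin (2*n) → ℝ) →L[ℝ] (Fin (2*n) → ℝ) :=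
  (ContinuousLinearMap.apply ℝ (Fin (2*n) → ℝ) Z).comp (fderiv ℝ Γ x Y)
  - (ContinuousLinearMap.apply ℝ (Fin (2*n) → ℝ) Z).comp
      ((ContinuousLinearMap.apply ℝ ((Fin (2*n) → ℝ) →L[ℝ] (Fin (2*n) → ℝ)) Y).comp (fderiv ℝ Γ x))
  + (Γ x Y).comp ((ContinuousLinearMap.apply ℝ (Fin (2*n) → ℝ) Z).comp (Γ x))
  - (ContinuousLinearMap.apply ℝ (Fin (2*n) → ℝ) (Γ x Y Z)).comp (Γ x)

lemma curvMid_apply (Γ : (Fin (2*n) → ℝ) → (Fin (2*n) → ℝ) →L[ℝ] (Fin (2*n) → ℝ) →L[ℝ] (Fin (2*n) → ℝ))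
    (x Y Z W : Fin (2*n) → ℝ) : curvMid Γ x Y Z W = curv n Γ x Y W Z := rfl

/-! ### Differentiability -/

lemma diff_fderiv_apply {E : Type*} [NormedAddCommGroup E] [NormedSpace ℝ E]
    (Γ : E → E →L[ℝ] E →L[ℝ] E) (hΓ : ContDiff ℝ (⊤ : ℕ∞) Γ) (Y Z : E) :
    Differentiable ℝ (fun p => fderiv ℝ Γ p Y Z) := by
  have h2 : Differentiable ℝ (fderiv ℝ Γ) :=
    (hΓ.fderiv_right (m := (⊤:ℕ∞)) (by simp)).differentiable (by simp)
  intro x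
  exact ((h2 x).clm_apply (differentiableAt_const Y)).clm_apply (differentiableAt_const Z)

lemma diff_curv (hΓ : ContDiff ℝ (⊤ : ℕ∞) Γ) (Y Z : Fin (2*n) → ℝ) :
    Differentiable ℝ (fun p => curv n Γ p Y Z) := by
  have h1 : Differentiable ℝ Γ := hΓ.differentiable (by simp)
  have h2 := diff_fderiv_apply Γ hΓ
  intro x
  apply DifferentiableAt.sub
  apply DifferentiableAt.add
  apply DifferentiableAt.sub
  · exact h2 Y Z x
  · exact h2 Z Y x
  · exact ((h1 x).clm_apply (differentiableAt_const Y)).clm_comp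
      ((h1 x).clm_apply (differentiableAt_const Z))
  · exact ((h1 x).clm_apply (differentiableAt_const Z)).clm_comp
      ((h1 x).clm_apply (differentiableAt_const Y))

lemma diff_ricci (hΓ : ContDiff ℝ (⊤ : ℕ∞) Γ) (Y Z : Fin (2*n) → ℝ) :
    Differentiable ℝ (fun p => ricci n Γ p Y Z) := by
  unfold ricci
  apply Differentiable.fun_sum
  intro a _
  exact (ContinuousLinearMap.proj (R := ℝ) (φ := fun _ : Fin (2*n) => ℝ) a).differentiable.comp
    ((diff_curv hΓ Y (Pi.single a 1)).clm_apply (differentiable_const Z))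

/-- Evaluating the derivative of the Ricci tensor as a sum of derivatives of the curvature. -/
lemma fderiv_ricci_eq (hΓ : ContDiff ℝ (⊤ : ℕ∞) Γ) (x X Y Z : Fin (2*n) → ℝ) :
    fderiv ℝ (fun p => ricci n Γ p Y Z) x X
      = ∑ a : Fin (2*n), (fderiv ℝ (fun p => curv n Γ p Y (Pi.single a 1)) x X) Z a := by
  classical
  set L : Fin (2*n) → ((Fin (2*n) → ℝ) →L[ℝ] (Fin (2*n) → ℝ)) →L[ℝ] ℝ := fun a =>
    (ContinuousLinearMap.proj (R := ℝ) (φ := fun _ : Fin (2*n) => ℝ) a).comp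
      (ContinuousLinearMap.apply ℝ (Fin (2*n) → ℝ) Z) with hL
  have hFa : ∀ a : Fin (2*n), HasFDerivAt (fun p => curv n Γ p Y (Pi.single a 1))
      (fderiv ℝ (fun p => curv n Γ p Y (Pi.single a 1)) x) x := fun a =>
    ((diff_curv hΓ Y (Pi.single a 1)) x).hasFDerivAt
  have hsum : HasFDerivAt (fun p => ricci n Γ p Y Z)
      (∑ a : Fin (2*n), (L a).comp (fderiv ℝ (fun p => curv n Γ p Y (Pi.single a 1)) x)) x := by
    apply HasFDerivAt.fun_sum
    intro a _
    exact ((L a).hasFDerivAt).comp x (hFa a)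
  rw [hsum.fderiv]
  simp [hL, ContinuousLinearMap.sum_apply]

/-- Commuting `fderiv` with evaluation and `Ω`. -/
lemma fderiv_omega_curv (hΓ : ContDiff ℝ (⊤ : ℕ∞) Γ) (x X Y Z W T : Fin (2*n) → ℝ) :
    fderiv ℝ (fun p => Omega n (curv n Γ p Y Z W) T) x X
      = Omega n ((fderiv ℝ (fun p => curv n Γ p Y Z) x X) W) T := by
  set L : ((Fin (2*n) → ℝ) →L[ℝ] (Fin (2*n) → ℝ)) →L[ℝ] ℝ :=
    (omegaCLM n T).comp (ContinuousLinearMap.apply ℝ (Fin (2*n) → ℝ) W) with hL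
  have hF : HasFDerivAt (fun p => curv n Γ p Y Z)
      (fderiv ℝ (fun p => curv n Γ p Y Z) x) x := ((diff_curv hΓ Y Z) x).hasFDerivAt
  have h : HasFDerivAt (fun p => Omega n (curv n Γ p Y Z W) T)
      (L.comp (fderiv ℝ (fun p => curv n Γ p Y Z) x)) x := L.hasFDerivAt.comp x hF
  rw [h.fderiv]
  simp [hL]

end StmtAux

open StmtAux

/-- A Ricci-type symplectic connection `∇ = ∇⁰ + Γ` on `(ℝ^{2n},Ω)`,
`n ≥ 2`, with 1-form `u` as in Lemma 1, is locally symmetric (`∇R = 0`) iff `u ≡ 0`. -/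
theorem locally_symmetric_iff_u_zero (n : ℕ) (hn : 2 ≤ n)
    (Γ : (Fin (2*n) → ℝ) → (Fin (2*n) → ℝ) →L[ℝ] (Fin (2*n) → ℝ) →L[ℝ] (Fin (2*n) → ℝ))
    (hΓ : ContDiff ℝ (⊤ : ℕ∞) Γ)
    (hsym₁ : ∀ x X Y Z, Omega n (Γ x X Y) Z = Omega n (Γ x Y X) Z)
    (hsym₂ : ∀ x X Y Z, Omega n (Γ x X Y) Z = Omega n (Γ x X Z) Y)
    (hR : IsRicciType n Γ)
    (u : (Fin (2*n) → ℝ) → ((Fin (2*n) → ℝ) →L[ℝ] ℝ))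
    (hu : ContDiff ℝ (⊤ : ℕ∞) u)
    (hur : ∀ x X Y Z, nablaRicci n Γ x X Y Z =
      (1/(2*(n:ℝ)+1)) * (Omega n X Y * u x Z + Omega n X Z * u x Y)) :
    (∀ x X Y Z, nablaCurv n Γ x X Y Z = 0) ↔ (∀ x, u x = 0) := by
  classical
  -- Γ(X) is in the symplectic Lie algebra
  have gsp : ∀ x X A B, Omega n (Γ x X A) B = - Omega n A (Γ x X B) := by
    intro x X A B
    rw [hsym₂ x X A B, Omega_antisym]
  constructor
  · -- ∇R = 0 → u = 0
    intro h x
    -- first, ∇r = 0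
    have hnr : ∀ X Y Z, nablaRicci n Γ x X Y Z = 0 := by
      intro X Y Z
      have hper : ∀ a : Fin (2*n),
          (fderiv ℝ (fun p => curv n Γ p Y (Pi.single a 1)) x X) Z a
            = - (Γ x X (curv n Γ x Y (Pi.single a 1) Z)) a
              + (curv n Γ x Y (Pi.single a 1) (Γ x X Z)) a
              + (curv n Γ x (Γ x X Y) (Pi.single a 1) Z) a
              + (curv n Γ x Y (Γ x X (Pi.single a 1)) Z) a := by
        intro a
        have h0 := h x X Y (Pi.single a 1)
        have h1 : (nablaCurv n Γ x X Y (Pi.single a 1)) Z a = 0 := by rw [h0]; simp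
        simp only [nablaCurv, ContinuousLinearMap.add_apply, ContinuousLinearMap.sub_apply,
          ContinuousLinearMap.comp_apply, Pi.add_apply, Pi.sub_apply] at h1
        linarith [h1]
      have htr : ∑ a : Fin (2*n), (Γ x X (curv n Γ x Y (Pi.single a 1) Z)) a
          = ∑ a : Fin (2*n), (curv n Γ x Y (Γ x X (Pi.single a 1)) Z) a := by
        have := trace_comm ((Γ x X).toLinearMap) ((curvMid Γ x Y Z).toLinearMap)
        simpa [curvMid_apply] using this
      unfold nablaRicci
      rw [fderiv_ricci_eq hΓ x X Y Z, Finset.sum_congr rfl fun a _ => hper a]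
      simp only [Finset.sum_add_distrib, Finset.sum_neg_distrib]
      have e1 : ∑ a : Fin (2*n), (curv n Γ x Y (Pi.single a 1) (Γ x X Z)) a
          = ricci n Γ x Y (Γ x X Z) := rfl
      have e2 : ∑ a : Fin (2*n), (curv n Γ x (Γ x X Y) (Pi.single a 1) Z) a
          = ricci n Γ x (Γ x X Y) Z := rfl
      rw [e1, e2, htr]
      ring
    -- now conclude u x = 0
    ext v
    simp only [ContinuousLinearMap.zero_apply]
    by_contra huv
    have hz : ∀ X, Omega n X v = 0 := by
      intro X
      have := hur x X v v
      rw [hnr X v v] at this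
      have hc : (1/(2*(n:ℝ)+1)) ≠ 0 := by
        have : (0:ℝ) < 2*(n:ℝ)+1 := by positivity
        positivity
      have h2 : Omega n X v * u x v = 0 := by
        field_simp at this
        linarith
      rcases mul_eq_zero.mp h2 with h | h
      · exact h
      · exact absurd h huv
    have hv : v = 0 := by
      apply Omega_nondeg
      intro T
      rw [Omega_antisym, hz T, neg_zero]
    rw [hv] at huv
    exact huv (map_zero _)
  · -- u = 0 → ∇R = 0
    intro h0 x X Y Z
    have hnr : ∀ A B, nablaRicci n Γ x X A B = 0 := by
      intro A B
      rw [hur x X A B, h0 x]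
      simp
    -- derivative of ricci, rewritten:
    have hdr : ∀ A B, fderiv ℝ (fun p => ricci n Γ p A B) x X
        = ricci n Γ x (Γ x X A) B + ricci n Γ x A (Γ x X B) := by
      intro A B
      have := hnr A B
      unfold nablaRicci at this
      linarith
    -- differentiate the Ricci-type identity
    apply ContinuousLinearMap.ext
    intro W
    simp only [ContinuousLinearMap.zero_apply]
    apply Omega_nondeg
    intro T
    -- key derivative identity
    have key : Omega n ((fderiv ℝ (fun p => curv n Γ p Y Z) x X) W) T =
        -(1/(2*((n:ℝ)+1))) * (2 * Omega n Y Z * (fderiv ℝ (fun p => ricci n Γ p W T) x X)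
          + Omega n Y W * (fderiv ℝ (fun p => ricci n Γ p Z T) x X)
          + Omega n Y T * (fderiv ℝ (fun p => ricci n Γ p Z W) x X)
          - Omega n Z W * (fderiv ℝ (fun p => ricci n Γ p Y T) x X)
          - Omega n Z T * (fderiv ℝ (fun p => ricci n Γ p Y W) x X)) := by
      rw [← fderiv_omega_curv hΓ x X Y Z W T]
      have hfun : (fun p => Omega n (curv n Γ p Y Z W) T)
          = fun p => -(1/(2*((n:ℝ)+1))) * (2 * Omega n Y Z * ricci n Γ p W T
            + Omega n Y W * ricci n Γ p Z T + Omega n Y T * ricci n Γ p Z W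
            - Omega n Z W * ricci n Γ p Y T - Omega n Z T * ricci n Γ p Y W) := by
        funext p
        exact hR p Y Z W T
      rw [hfun]
      have hd : ∀ A B : Fin (2*n) → ℝ, HasFDerivAt (fun p => ricci n Γ p A B)
          (fderiv ℝ (fun p => ricci n Γ p A B) x) x := fun A B =>
        ((diff_ricci hΓ A B) x).hasFDerivAt
      have hbig : HasFDerivAt (fun p => -(1/(2*((n:ℝ)+1))) * (2 * Omega n Y Z * ricci n Γ p W T
            + Omega n Y W * ricci n Γ p Z T + Omega n Y T * ricci n Γ p Z W
            - Omega n Z W * ricci n Γ p Y T - Omega n Z T * ricci n Γ p Y W))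
          ((-(1/(2*((n:ℝ)+1)))) • ((2 * Omega n Y Z) • fderiv ℝ (fun p => ricci n Γ p W T) x
            + (Omega n Y W) • fderiv ℝ (fun p => ricci n Γ p Z T) x
            + (Omega n Y T) • fderiv ℝ (fun p => ricci n Γ p Z W) x
            - (Omega n Z W) • fderiv ℝ (fun p => ricci n Γ p Y T) x
            - (Omega n Z T) • fderiv ℝ (fun p => ricci n Γ p Y W) x)) x := by
        exact (((((hd W T).const_mul (2 * Omega n Y Z)).add
          ((hd Z T).const_mul (Omega n Y W))).add
          ((hd Z W).const_mul (Omega n Y T))).sub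
          ((hd Y T).const_mul (Omega n Z W))).sub
          ((hd Y W).const_mul (Omega n Z T)) |>.const_mul (-(1/(2*((n:ℝ)+1))))
      rw [hbig.fderiv]
      simp only [ContinuousLinearMap.smul_apply, ContinuousLinearMap.add_apply,
        ContinuousLinearMap.sub_apply, smul_eq_mul]
    -- expand nablaCurv applied to W
    have hexp : Omega n ((nablaCurv n Γ x X Y Z) W) T
        = Omega n ((fderiv ℝ (fun p => curv n Γ p Y Z) x X) W) T
          + Omega n (Γ x X (curv n Γ x Y Z W)) T
          - Omega n (curv n Γ x Y Z (Γ x X W)) T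
          - Omega n (curv n Γ x (Γ x X Y) Z W) T
          - Omega n (curv n Γ x Y (Γ x X Z) W) T := by
      simp only [nablaCurv, ContinuousLinearMap.add_apply, ContinuousLinearMap.sub_apply,
        ContinuousLinearMap.comp_apply]
      rw [Omega_sub_left, Omega_sub_left, Omega_sub_left, Omega_add_left]
    rw [hexp, key,
      gsp x X (curv n Γ x Y Z W) T,
      hR x Y Z W (Γ x X T),
      hR x Y Z (Γ x X W) T,
      hR x (Γ x X Y) Z W T,
      hR x Y (Γ x X Z) W T,
      hdr W T, hdr Z T, hdr Z W, hdr Y T, hdr Y W]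
    linear_combination (1/(2*((n:ℝ)+1))) * (
        (2 * ricci n Γ x W T) * (gsp x X Y Z)
      + (ricci n Γ x Z T) * (gsp x X Y W)
      + (ricci n Γ x Z W) * (gsp x X Y T)
      - (ricci n Γ x Y T) * (gsp x X Z W)
      - (ricci n Γ x Y W) * (gsp x X Z T))
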